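/- arXiv:2412.09904 — 2 statements merged into one kernel-verified Lean document; each statement's English description precedes it below -/
import Mathlib

section
/- Let n = 4t with t ≥ 1. The maximum eigenvalue of the Hadamard graph H_n equals C(n, n/2), and it is attained exactly at a = 0 and a = (1,1,...,1); i.e., Σ_{x: wt(x)=n/2} (-1)^{x·a} = C(n,n/2) iff a ∈ {0_n, 1_n}, and is strictly smaller otherwise. -/
/-- Hamming weight of a binary vector. -/
def hw {n : ℕ} (x : Fin n → ZMod 2) : ℕ :=
  (Finset.univ.filter (fun i => x i ≠ 0)).card

lemma zmod2_cases (z : ZMod 2) : z = 0 ∨ z = 1 := by revert z; decide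

lemma odd_cast_zmod2 {k : ℕ} (hk : Odd k) : (k : ZMod 2) = 1 := by
  obtain ⟨j, rfl⟩ := hk
  rw [Nat.cast_add, Nat.cast_mul, ZMod.natCast_self, zero_mul, zero_add, Nat.cast_one]

lemma even_cast_zmod2 {k : ℕ} (hk : Even k) : (k : ZMod 2) = 0 := by
  obtain ⟨j, rfl⟩ := hk
  rw [show j + j = 2 * j by ring, Nat.cast_mul, ZMod.natCast_self, zero_mul]

lemma card_hw (n k : ℕ) :
    (Finset.univ.filter (fun x : Fin n → ZMod 2 => hw x = k)).card = n.choose k := by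
  have hpc := Finset.card_powersetCard k (Finset.univ : Finset (Fin n))
  rw [Finset.card_fin] at hpc
  rw [← hpc]
  refine Finset.card_nbij' (fun x => Finset.univ.filter (fun i => x i ≠ 0))
    (fun s => fun i => if i ∈ s then 1 else 0) ?_ ?_ ?_ ?_
  · intro x hx
    simp only [Finset.mem_coe, Finset.mem_filter, Finset.mem_univ, true_and] at hx
    simp only [Finset.mem_coe, Finset.mem_powersetCard]
    exact ⟨Finset.subset_univ _, hx⟩
  · intro s hs
    simp only [Finset.mem_coe, Finset.mem_powersetCard] at hs
    refine Finset.mem_coe.mpr (Finset.mem_filter.mpr ⟨Finset.mem_univ _, ?_⟩)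
    simp only [hw]
    rw [← hs.2]
    congr 1
    ext i
    simp only [Finset.mem_filter, Finset.mem_univ, true_and]
    split_ifs with h <;> simpa using h
  · intro x _
    funext i
    rcases zmod2_cases (x i) with h | h <;> simp [h]
  · intro s _
    ext i
    simp only [Finset.mem_filter, Finset.mem_univ, true_and]
    split_ifs with h <;> simpa using h

lemma sum_eq_card_cast {n : ℕ} (x : Fin n → ZMod 2) :
    (∑ i, x i) = ((hw x : ℕ) : ZMod 2) := by
  unfold hw
  rw [← Finset.sum_filter_ne_zero Finset.univ]
  rw [Finset.sum_congr rfl (fun i hi => ?_), Finset.sum_const, nsmul_eq_mul, mul_one]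
  rcases zmod2_cases (x i) with h | h
  · simp only [Finset.mem_filter] at hi; exact absurd h hi.2
  · exact h

/-- Existence of a "bad" vector when `a ∉ {0, 1}`. -/
lemma exists_bad (t n : ℕ) (ht : 1 ≤ t) (hn : n = 4 * t) (a : Fin n → ZMod 2)
    (ha0 : a ≠ (fun _ => 0)) (ha1 : a ≠ (fun _ => 1)) :
    ∃ x : Fin n → ZMod 2, hw x = n / 2 ∧ (∑ i, x i * a i) = 1 := by
  classical
  set A : Finset (Fin n) := Finset.univ.filter (fun i => a i = 1) with hA
  set B : Finset (Fin n) := Finset.univ.filter (fun i => a i ≠ 1) with hB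
  have hAB : A.card + B.card = n := by
    rw [hA, hB, Finset.card_filter_add_card_filter_not, Finset.card_fin]
  have hA1 : 1 ≤ A.card := by
    obtain ⟨i, hi⟩ := Function.ne_iff.mp ha0
    have h1 : a i = 1 := (zmod2_cases (a i)).resolve_left hi
    exact Finset.card_pos.mpr ⟨i, by simp [hA, h1]⟩
  have hB1 : 1 ≤ B.card := by
    obtain ⟨i, hi⟩ := Function.ne_iff.mp ha1
    exact Finset.card_pos.mpr ⟨i, by simp [hB, hi]⟩
  set k : ℕ := if A.card ≤ 2 * t then 1 else 2 * t - 1 with hk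
  have hkodd : Odd k := by
    rw [hk]; split
    · exact odd_one
    · exact ⟨t - 1, by omega⟩
  have hkA : k ≤ A.card := by rw [hk]; split <;> omega
  have hkB : 2 * t - k ≤ B.card := by rw [hk]; split <;> omega
  have hk2 : k ≤ 2 * t := by rw [hk]; split <;> omega
  obtain ⟨s₁, hs₁A, hs₁c⟩ := Finset.exists_subset_card_eq hkA
  obtain ⟨s₂, hs₂B, hs₂c⟩ := Finset.exists_subset_card_eq hkB
  have hdisj : Disjoint s₁ s₂ := by
    apply Finset.disjoint_left.mpr
    intro i hi1 hi2
    have h1 : a i = 1 := (Finset.mem_filter.mp (hs₁A hi1)).2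
    exact (Finset.mem_filter.mp (hs₂B hi2)).2 h1
  refine ⟨fun i => if i ∈ s₁ ∪ s₂ then 1 else 0, ?_, ?_⟩
  · have hfe : (Finset.univ.filter fun i =>
        (if i ∈ s₁ ∪ s₂ then (1 : ZMod 2) else 0) ≠ 0) = s₁ ∪ s₂ := by
      ext i
      simp only [Finset.mem_filter, Finset.mem_univ, true_and]
      split_ifs with h <;> simpa using h
    rw [hw, hfe, Finset.card_union_of_disjoint hdisj, hs₁c, hs₂c]
    omega
  · have hsum : (∑ i, (if i ∈ s₁ ∪ s₂ then (1 : ZMod 2) else 0) * a i)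
        = ∑ i ∈ s₁ ∪ s₂, a i := by
      rw [Finset.sum_congr rfl (g := fun i => if i ∈ s₁ ∪ s₂ then a i else 0)
        (fun i _ => by
          by_cases h : i ∈ s₁ ∪ s₂
          · simp only [if_pos h, one_mul]
          · simp only [if_neg h, zero_mul])]
      rw [Finset.sum_ite_mem, Finset.univ_inter]
    rw [hsum, Finset.sum_union hdisj]
    have h1 : ∑ i ∈ s₁, a i = (k : ZMod 2) := by
      rw [Finset.sum_congr rfl (fun i hi => (Finset.mem_filter.mp (hs₁A hi)).2),
        Finset.sum_const, hs₁c, nsmul_eq_mul, mul_one]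
    have h2 : ∑ i ∈ s₂, a i = 0 := by
      apply Finset.sum_eq_zero
      intro i hi
      exact (zmod2_cases (a i)).resolve_right (Finset.mem_filter.mp (hs₂B hi)).2
    rw [h1, h2, add_zero, odd_cast_zmod2 hkodd]

/-- The maximum eigenvalue of the Hadamard graph `H_n`, `n = 4t`, is `C(n,n/2)`,
attained exactly at `a = 0` and `a = 1_n`. -/
theorem hadamard_graph_max_eigenvalue (t : ℕ) (ht : 1 ≤ t) (n : ℕ) (hn : n = 4 * t) :
    (∀ a : Fin n → ZMod 2,
      (∑ x ∈ Finset.univ.filter (fun x : Fin n → ZMod 2 => hw x = n / 2),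
          (-1 : ℤ) ^ (∑ i, x i * a i).val)
        ≤ (n.choose (n / 2) : ℤ)) ∧
    (∀ a : Fin n → ZMod 2,
      (∑ x ∈ Finset.univ.filter (fun x : Fin n → ZMod 2 => hw x = n / 2),
          (-1 : ℤ) ^ (∑ i, x i * a i).val)
        = (n.choose (n / 2) : ℤ) ↔ a = (fun _ => 0) ∨ a = (fun _ => 1)) := by
  classical
  set S := Finset.univ.filter (fun x : Fin n → ZMod 2 => hw x = n / 2) with hS
  have hcard : S.card = n.choose (n / 2) := card_hw n (n / 2)
  have hle : ∀ a : Fin n → ZMod 2,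
      (∑ x ∈ S, (-1 : ℤ) ^ (∑ i, x i * a i).val) ≤ (n.choose (n / 2) : ℤ) := by
    intro a
    calc (∑ x ∈ S, (-1 : ℤ) ^ (∑ i, x i * a i).val) ≤ ∑ _x ∈ S, (1 : ℤ) := by
          apply Finset.sum_le_sum
          intro x _
          rcases neg_one_pow_eq_or ℤ (∑ i, x i * a i).val with h | h <;> rw [h] <;> norm_num
      _ = (n.choose (n / 2) : ℤ) := by
          rw [Finset.sum_const, nsmul_eq_mul, mul_one, hcard]
  refine ⟨hle, fun a => ⟨?_, ?_⟩⟩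
  · intro heq
    by_contra hcon
    push_neg at hcon
    obtain ⟨ha0, ha1⟩ := hcon
    obtain ⟨x₀, hx₀w, hx₀s⟩ := exists_bad t n ht hn a ha0 ha1
    have hx₀S : x₀ ∈ S := Finset.mem_filter.mpr ⟨Finset.mem_univ _, hx₀w⟩
    have hlt : (∑ x ∈ S, (-1 : ℤ) ^ (∑ i, x i * a i).val) < ∑ _x ∈ S, (1 : ℤ) := by
      apply Finset.sum_lt_sum
      · intro x _
        rcases neg_one_pow_eq_or ℤ (∑ i, x i * a i).val with h | h <;> rw [h] <;> norm_num
      · refine ⟨x₀, hx₀S, ?_⟩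
        rw [hx₀s, show (1 : ZMod 2).val = 1 from rfl]
        norm_num
    rw [Finset.sum_const, nsmul_eq_mul, mul_one, hcard] at hlt
    exact absurd heq (ne_of_lt hlt)
  · rintro (rfl | rfl)
    · have h1 : ∀ x ∈ S,
          (-1 : ℤ) ^ (∑ i, x i * (fun _ => (0 : ZMod 2)) i).val = 1 := by
        intro x _; simp
      rw [Finset.sum_congr rfl h1, Finset.sum_const, nsmul_eq_mul, mul_one, hcard]
    · have h1 : ∀ x ∈ S,
          (-1 : ℤ) ^ (∑ i, x i * (fun _ => (1 : ZMod 2)) i).val = 1 := by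
        intro x hx
        have hxw : hw x = n / 2 := (Finset.mem_filter.mp hx).2
        simp only [mul_one]
        rw [sum_eq_card_cast, hxw, even_cast_zmod2 (by rw [hn]; exact ⟨t, by omega⟩),
          show (0 : ZMod 2).val = 0 from rfl, pow_zero]
      rw [Finset.sum_congr rfl h1, Finset.sum_const, nsmul_eq_mul, mul_one, hcard]
end

section
/- For the binary Krawtchouk polynomial with n = 4t+2 and ℓ = 2t+2: if r = 2j then K_{2t+2}^{4t+2}(2j) = (-1)^j [C(2t,j) - C(2t,j-1)] C(4t+2, 2t+2) / C(4t+2, 2j), and if r = 2j+1 then K_{2t+2}^{4t+2}(2j+1) = (-1)^{j+1} · 2 C(2t,j) C(4t+2, 2t+2) / C(4t+2, 2j+1). -/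
open Polynomial Finset

def binKraw (n ℓ r : ℕ) : ℤ :=
  ∑ i ∈ Finset.range (ℓ + 1), (-1 : ℤ) ^ i * (r.choose i) * ((n - r).choose (ℓ - i))

lemma coeff_one_sub_X_pow (r k : ℕ) :
    ((1 - X : ℤ[X]) ^ r).coeff k = (-1) ^ k * (r.choose k) := by
  rcases le_or_gt k r with h | h
  · have h1 : (1 - X : ℤ[X]) = -1 * (X + C (-1)) := by simp; ring
    rw [h1, mul_pow, ← C_1, ← C_neg, ← C_pow, coeff_C_mul, coeff_X_add_C_pow]
    have h2 : (-1:ℤ)^r * (-1)^(r-k) = (-1)^k := by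
      rw [← pow_add, show r + (r-k) = 2*(r-k)+k by omega, pow_add, pow_mul]
      norm_num
    rw [← mul_assoc, h2]
  · rw [Nat.choose_eq_zero_of_lt h]
    have hd : ((1 - X : ℤ[X]) ^ r).natDegree < k := by
      refine lt_of_le_of_lt ?_ h
      refine (natDegree_pow_le).trans ?_
      have h3 : (1 - X : ℤ[X]).natDegree ≤ 1 := by
        apply natDegree_sub_le_iff_left _ |>.mpr <;> simp
      nlinarith [h3]
    rw [coeff_eq_zero_of_natDegree_lt hd]; ring

noncomputable def Pk (n r : ℕ) : ℤ[X] := (1 - X) ^ r * (1 + X) ^ (n - r)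

lemma kraw_eq_coeff (n ℓ r : ℕ) : binKraw n ℓ r = (Pk n r).coeff ℓ := by
  rw [binKraw, Pk, coeff_mul, Finset.Nat.sum_antidiagonal_eq_sum_range_succ
    (f := fun a b => ((1 - X : ℤ[X]) ^ r).coeff a * ((1 + X : ℤ[X]) ^ (n - r)).coeff b)]
  refine Finset.sum_congr rfl fun i hi => ?_
  rw [coeff_one_sub_X_pow, coeff_one_add_X_pow]

lemma onesubX : (1 - X : ℤ[X]) = -(X - C 1) := by rw [C_1]; ring
lemma deg_onesub : (1 - X : ℤ[X]).natDegree = 1 := by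
  rw [onesubX, natDegree_neg, natDegree_X_sub_C]
lemma lead_onesub : (1 - X : ℤ[X]).leadingCoeff = -1 := by
  rw [onesubX, leadingCoeff_neg, leadingCoeff_X_sub_C]
lemma onesub_ne : (1 - X : ℤ[X]) ≠ 0 := by
  intro h; have := lead_onesub; rw [h] at this; simp at this
lemma deg_oneadd : (1 + X : ℤ[X]).natDegree = 1 := by
  rw [add_comm, ← C_1, natDegree_X_add_C]
lemma monic_oneadd : (1 + X : ℤ[X]).Monic := by
  rw [add_comm, ← C_1]; exact monic_X_add_C 1
lemma oneadd_ne : (1 + X : ℤ[X]) ≠ 0 := monic_oneadd.ne_zero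

lemma Pk_ne (n r : ℕ) : Pk n r ≠ 0 :=
  mul_ne_zero (pow_ne_zero _ onesub_ne) (pow_ne_zero _ oneadd_ne)

lemma natDegree_Pk (n r : ℕ) (h : r ≤ n) : (Pk n r).natDegree = n := by
  rw [Pk, natDegree_mul (pow_ne_zero _ onesub_ne) (pow_ne_zero _ oneadd_ne),
    natDegree_pow, natDegree_pow, deg_onesub, deg_oneadd]
  omega

lemma rev_onesub : (1 - X : ℤ[X]).reverse = X - 1 := by
  rw [reverse, deg_onesub]
  have h : (1 - X : ℤ[X]) = C 1 - X ^ 1 := by simp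
  rw [h, reflect_sub, reflect_C, reflect_monomial, revAt_le (le_refl 1)]
  simp [revAt]

lemma rev_oneadd : (1 + X : ℤ[X]).reverse = 1 + X := by
  rw [reverse, deg_oneadd]
  have h : (1 + X : ℤ[X]) = C 1 + X ^ 1 := by simp
  rw [h, reflect_add, reflect_C, reflect_monomial, revAt_le (le_refl 1)]
  simp [revAt]; ring

lemma rev_pow (f : ℤ[X]) (k : ℕ) : (f ^ k).reverse = f.reverse ^ k := by
  induction k with
  | zero => simp [reverse]
  | succ m ih => rw [pow_succ, reverse_mul_of_domain, ih, pow_succ]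

lemma rev_Pk (n r : ℕ) : (Pk n r).reverse = (-1) ^ r * Pk n r := by
  rw [Pk, reverse_mul_of_domain, rev_pow, rev_pow, rev_onesub, rev_oneadd,
    show (X - 1 : ℤ[X]) = -1 * (1 - X) by ring, mul_pow]
  ring

/-- reflection: K_{n-ℓ}(r) = (-1)^r K_ℓ(r) -/
lemma kraw_refl (n ℓ r : ℕ) (hr : r ≤ n) (hl : ℓ ≤ n) :
    binKraw n (n - ℓ) r = (-1) ^ r * binKraw n ℓ r := by
  rw [kraw_eq_coeff, kraw_eq_coeff]
  have h1 : (Pk n r).coeff (n - ℓ) = (Pk n r).reverse.coeff ℓ := by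
    rw [coeff_reverse, natDegree_Pk n r hr, revAt_le hl]
  rw [h1, rev_Pk, show ((-1 : ℤ[X]))^r = C ((-1)^r) by simp, coeff_C_mul]

/-- Eq1: K_ℓ(r+1) + K_{ℓ-1}(r+1) = K_ℓ(r) - K_{ℓ-1}(r) -/
lemma kraw_eq1 (n ℓ r : ℕ) (hr : r + 1 ≤ n) (hl : 1 ≤ ℓ) :
    binKraw n ℓ (r+1) + binKraw n (ℓ-1) (r+1) = binKraw n ℓ r - binKraw n (ℓ-1) r := by
  have key : (1 + X) * Pk n (r+1) = (1 - X) * Pk n r := by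
    rw [Pk, Pk, show n - r = (n - (r+1)) + 1 by omega, pow_succ, pow_succ]
    ring
  have hc := congrArg (fun p => Polynomial.coeff p ℓ) key
  simp only [add_mul, sub_mul, one_mul, coeff_add, coeff_sub] at hc
  obtain ⟨m, rfl⟩ : ∃ m, ℓ = m + 1 := ⟨ℓ - 1, by omega⟩
  rw [coeff_X_mul, coeff_X_mul] at hc
  simp only [kraw_eq_coeff, Nat.add_sub_cancel]
  linarith

lemma deriv_aux1 (m : ℕ) :
    (1+X:ℤ[X]) * derivative ((1+X)^m) = C (m:ℤ) * (1+X)^m := by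
  cases m with
  | zero => simp
  | succ k =>
    rw [derivative_pow]
    have hd : derivative (1+X:ℤ[X]) = 1 := by simp
    rw [hd, Nat.add_sub_cancel]
    push_cast
    ring

lemma deriv_aux2 (m : ℕ) :
    (1-X:ℤ[X]) * derivative ((1-X)^m) = -(C (m:ℤ)) * (1-X)^m := by
  cases m with
  | zero => simp
  | succ k =>
    rw [derivative_pow]
    have hd : derivative (1-X:ℤ[X]) = -1 := by simp
    rw [hd, Nat.add_sub_cancel]
    push_cast
    ring

lemma deriv_key (n r : ℕ) (hr : r ≤ n) :
    (1 - X^2) * derivative (Pk n r) = (C ((n:ℤ) - 2*r) - C (n:ℤ) * X) * Pk n r := by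
  have hcast : C (((n - r : ℕ)):ℤ) = C (n:ℤ) - C (r:ℤ) := by
    rw [← C_sub]; congr 1; omega
  rw [Pk, derivative_mul]
  have e1 := deriv_aux2 r
  have e2 := deriv_aux1 (n - r)
  rw [hcast] at e2
  rw [show C ((n:ℤ) - 2*(r:ℤ)) = C (n:ℤ) - 2 * C (r:ℤ) by rw [C_sub, C_mul]; norm_num]
  linear_combination ((1+X) * (1+X:ℤ[X])^(n-r)) * e1 + ((1-X) * (1-X:ℤ[X])^r) * e2

lemma kraw_deriv (n m r : ℕ) (hr : r ≤ n) :
    ((m:ℤ)+3) * binKraw n (m+3) r =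
      ((n:ℤ) - 2*r) * binKraw n (m+2) r + ((m:ℤ) + 1 - n) * binKraw n (m+1) r := by
  have hc := congrArg (fun p => Polynomial.coeff p (m+2)) (deriv_key n r hr)
  simp only [sub_mul, one_mul, coeff_sub, mul_assoc, coeff_C_mul] at hc
  rw [show m + 2 = m + 2 by rfl] at hc
  rw [coeff_X_pow_mul (derivative (Pk n r)) 2 m] at hc
  rw [coeff_derivative, coeff_derivative] at hc
  rw [show m + 2 + 1 = m + 3 by rfl] at hc
  rw [show (X : ℤ[X]) * Pk n r = Pk n r * X by ring, coeff_mul_X] at hc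
  simp only [kraw_eq_coeff]
  push_cast at hc ⊢
  linarith

lemma kraw_zero (n ℓ : ℕ) : binKraw n ℓ 0 = n.choose ℓ := by
  rw [kraw_eq_coeff, Pk]
  simp [coeff_one_add_X_pow]

section Main
variable (t : ℕ)

/-- c odd = 0 -/
lemma c_odd_zero (r : ℕ) (hr : r ≤ 4*t+2) (hodd : ¬ 2 ∣ r) :
    binKraw (4*t+2) (2*t+1) r = 0 := by
  have h := kraw_refl (4*t+2) (2*t+1) r hr (by omega)
  rw [show 4*t+2 - (2*t+1) = 2*t+1 by omega] at h
  rw [Odd.neg_one_pow (Nat.odd_iff.mpr (by omega))] at h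
  linarith [h]

lemma R2 (ht : 1 ≤ t) (r : ℕ) (hr : r ≤ 4*t+2) :
    (2*(t:ℤ)+2) * binKraw (4*t+2) (2*t+2) r
      = ((4*(t:ℤ)+2) - 2*r) * binKraw (4*t+2) (2*t+1) r
        - (2*(t:ℤ)+2) * binKraw (4*t+2) (2*t) r := by
  have h := kraw_deriv (4*t+2) (2*t-1) r hr
  rw [show 2*t-1+3 = 2*t+2 by omega, show 2*t-1+2 = 2*t+1 by omega,
    show 2*t-1+1 = 2*t by omega] at h
  have hc1 : ((2*t-1 : ℕ) : ℤ) = 2*(t:ℤ) - 1 := by omega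
  rw [hc1] at h
  push_cast at h ⊢
  linarith [h]

lemma D_eq (r : ℕ) (hr : r ≤ 4*t+2) :
    binKraw (4*t+2) (2*t) r = (-1)^r * binKraw (4*t+2) (2*t+2) r := by
  have h := kraw_refl (4*t+2) (2*t+2) r hr (by omega)
  rw [show 4*t+2 - (2*t+2) = 2*t by omega] at h
  exact h

lemma R2' (ht : 1 ≤ t) (j : ℕ) (hr : 2*j ≤ 4*t+2) :
    (4*(t:ℤ)+4) * binKraw (4*t+2) (2*t+2) (2*j)
      = ((4*(t:ℤ)+2) - 4*j) * binKraw (4*t+2) (2*t+1) (2*j) := by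
  have h := R2 t ht (2*j) hr
  rw [D_eq t (2*j) hr] at h
  rw [show ((-1:ℤ))^(2*j) = 1 by rw [pow_mul]; norm_num] at h
  push_cast at h ⊢
  linarith [h]

lemma R1 (r : ℕ) (hr : r + 1 ≤ 4*t+2) :
    binKraw (4*t+2) (2*t+2) (r+1) + binKraw (4*t+2) (2*t+1) (r+1)
      = binKraw (4*t+2) (2*t+2) r - binKraw (4*t+2) (2*t+1) r := by
  have h := kraw_eq1 (4*t+2) (2*t+2) r hr (by omega)
  rw [show 2*t+2-1 = 2*t+1 by omega] at h
  exact h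

lemma qchoose (n k : ℕ) :
    (n.choose (k+1) : ℚ) * (k+1) = (n.choose k : ℚ) * ((n:ℚ) - k) := by
  rcases le_or_gt k n with h | h
  · have := Nat.choose_succ_right_eq n k
    have hc : ((n - k : ℕ) : ℚ) = (n:ℚ) - k := by
      push_cast [Nat.cast_sub h]; ring
    rw [← hc]
    exact_mod_cast this
  · rw [Nat.choose_eq_zero_of_lt h, Nat.choose_eq_zero_of_lt (by omega)]
    simp

lemma hI1q (tt j : ℕ) (_hj : j ≤ 2*tt) :
    ((((2*tt).choose j : ℚ) - (if 1 ≤ j then ((2*tt).choose (j-1) : ℚ) else 0))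
        * ((4*tt:ℚ)+2-2*j))
      = ((2*tt).choose j : ℚ) * ((4*tt:ℚ)+2-4*j) := by
  rcases Nat.eq_zero_or_pos j with rfl | hp
  · simp
  · rw [if_pos (show 1 ≤ j from hp)]
    obtain ⟨i, rfl⟩ : ∃ i, j = i + 1 := ⟨j - 1, by omega⟩
    have h := qchoose (2*tt) i
    push_cast at h ⊢
    linear_combination 2*h

lemma hI2q (tt j : ℕ) (_hj : j ≤ 2*tt) :
    (((2*tt).choose (j+1) : ℚ) - ((2*tt).choose j : ℚ)) * ((j:ℚ)+1)
      = ((2*tt).choose j : ℚ) * (2*(tt:ℚ) - 2*j - 1) := by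
  have h := qchoose (2*tt) j
  push_cast at h ⊢
  linear_combination h

lemma stepA (ht : 1 ≤ t) (j : ℕ) (h : 2*j+1 ≤ 4*t+2)
    (he : (binKraw (4*t+2) (2*t+2) (2*j) : ℚ) * ((4*t+2).choose (2*j))
      = (-1:ℚ)^j * (((2*t).choose j : ℚ) - (if 1 ≤ j then ((2*t).choose (j-1) : ℚ) else 0))
          * ((4*t+2).choose (2*t+2))) :
    (binKraw (4*t+2) (2*t+2) (2*j+1) : ℚ) * ((4*t+2).choose (2*j+1))
      = (-1:ℚ)^(j+1) * 2 * ((2*t).choose j : ℚ) * ((4*t+2).choose (2*t+2)) := by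
  set a0 : ℚ := (binKraw (4*t+2) (2*t+2) (2*j) : ℚ) with ha0
  set a1 : ℚ := (binKraw (4*t+2) (2*t+2) (2*j+1) : ℚ) with ha1
  set c0 : ℚ := (binKraw (4*t+2) (2*t+1) (2*j) : ℚ) with hc0
  set c1 : ℚ := (binKraw (4*t+2) (2*t+1) (2*j+1) : ℚ) with hc1d
  set x0 : ℚ := (((4*t+2).choose (2*j) : ℕ) : ℚ) with hx0
  set x1 : ℚ := (((4*t+2).choose (2*j+1) : ℕ) : ℚ) with hx1
  set K : ℚ := (((4*t+2).choose (2*t+2) : ℕ) : ℚ) with hK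
  set Cj : ℚ := (((2*t).choose j : ℕ) : ℚ) with hCj
  set Dl : ℚ := (((2*t).choose j : ℚ) - (if 1 ≤ j then ((2*t).choose (j-1) : ℚ) else 0)) with hDl
  have hR1 : a1 + c1 = a0 - c0 := by
    rw [ha1, hc1d, ha0, hc0]; exact_mod_cast R1 t (2*j) h
  have hc1 : c1 = 0 := by
    rw [hc1d]; exact_mod_cast c_odd_zero t (2*j+1) h (by omega)
  have hR2 : (4*(t:ℚ)+4) * a0 = ((4*(t:ℚ)+2) - 4*j) * c0 := by
    rw [ha0, hc0]; exact_mod_cast R2' t ht j (by omega)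
  have hx : x1 * (2*(j:ℚ)+1) = x0 * ((4*(t:ℚ)+2) - 2*j) := by
    have hq := qchoose (4*t+2) (2*j)
    push_cast at hq ⊢
    linear_combination hq
  have hI1 : Dl * ((4*(t:ℚ))+2-2*j) = Cj * ((4*(t:ℚ))+2-4*j) := hI1q t j (by omega)
  have hfac : ((2*(j:ℚ)+1) * ((4*(t:ℚ)+2) - 4*j)) ≠ 0 := by
    have h1 : (2*(j:ℚ)+1) ≠ 0 := by positivity
    have h2 : ((4*(t:ℚ)+2) - 4*j) ≠ 0 := by
      intro hz
      have : (4*t+2 : ℚ) = 4*(j:ℚ) := by linarith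
      have : 4*t + 2 = 4*j := by exact_mod_cast this
      omega
    exact mul_ne_zero h1 h2
  apply mul_right_cancel₀ hfac
  linear_combination (a1*((4*(t:ℚ)+2)-4*j)) * hx
    + (x0*((4*(t:ℚ)+2)-2*j)*((4*(t:ℚ)+2)-4*j)) * hR1
    - (x0*((4*(t:ℚ)+2)-2*j)*((4*(t:ℚ)+2)-4*j)) * hc1
    + (x0*((4*(t:ℚ)+2)-2*j)) * hR2
    - (((4*(t:ℚ)+2)-2*j)*(2+4*(j:ℚ))) * he
    - ((-1:ℚ)^j*K*(2+4*(j:ℚ))) * hI1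

lemma stepB (ht : 1 ≤ t) (j : ℕ) (h : 2*(j+1) ≤ 4*t+2)
    (ho : (binKraw (4*t+2) (2*t+2) (2*j+1) : ℚ) * ((4*t+2).choose (2*j+1))
      = (-1:ℚ)^(j+1) * 2 * ((2*t).choose j : ℚ) * ((4*t+2).choose (2*t+2))) :
    (binKraw (4*t+2) (2*t+2) (2*(j+1)) : ℚ) * ((4*t+2).choose (2*(j+1)))
      = (-1:ℚ)^(j+1)
          * (((2*t).choose (j+1) : ℚ) - (if 1 ≤ j+1 then ((2*t).choose (j+1-1) : ℚ) else 0))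
          * ((4*t+2).choose (2*t+2)) := by
  rw [if_pos (by omega : 1 ≤ j+1), show j+1-1 = j by omega]
  set a1 : ℚ := (binKraw (4*t+2) (2*t+2) (2*j+1) : ℚ) with ha1
  set a2 : ℚ := (binKraw (4*t+2) (2*t+2) (2*j+2) : ℚ) with ha2
  set c1 : ℚ := (binKraw (4*t+2) (2*t+1) (2*j+1) : ℚ) with hc1d
  set c2 : ℚ := (binKraw (4*t+2) (2*t+1) (2*j+2) : ℚ) with hc2d
  set x1 : ℚ := (((4*t+2).choose (2*j+1) : ℕ) : ℚ) with hx1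
  set x2 : ℚ := (((4*t+2).choose (2*j+2) : ℕ) : ℚ) with hx2
  set K : ℚ := (((4*t+2).choose (2*t+2) : ℕ) : ℚ) with hK
  set Cj : ℚ := (((2*t).choose j : ℕ) : ℚ) with hCj
  set Cj1 : ℚ := (((2*t).choose (j+1) : ℕ) : ℚ) with hCj1
  have h22 : 2*(j+1) = 2*j+2 := by omega
  rw [h22] at *
  have hR1 : a2 + c2 = a1 - c1 := by
    rw [ha2, hc2d, ha1, hc1d]; exact_mod_cast R1 t (2*j+1) (by omega)
  have hc1 : c1 = 0 := by
    rw [hc1d]; exact_mod_cast c_odd_zero t (2*j+1) (by omega) (by omega)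
  have hR2 : (4*(t:ℚ)+4) * a2 = ((4*(t:ℚ)+2) - 4*(j+1)) * c2 := by
    rw [ha2, hc2d]
    have := R2' t ht (j+1) (by omega)
    rw [show 2*(j+1) = 2*j+2 by omega] at this
    exact_mod_cast this
  have hx : x2 * (2*(j:ℚ)+2) = x1 * ((4*(t:ℚ)+1) - 2*j) := by
    have hq := qchoose (4*t+2) (2*j+1)
    push_cast at hq ⊢
    linear_combination hq
  have hI2 : (Cj1 - Cj) * ((j:ℚ)+1) = Cj * (2*(t:ℚ) - 2*j - 1) := hI2q t j (by omega)
  have hfac : ((2*(j:ℚ)+2) * (2*((4*(t:ℚ)+1) - 2*j))) ≠ 0 := by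
    have h1 : (2*(j:ℚ)+2) ≠ 0 := by positivity
    have h2 : (2*((4*(t:ℚ)+1) - 2*j)) ≠ 0 := by
      intro hz
      have : (4*t+1 : ℚ) = 2*(j:ℚ) := by linarith
      have : 4*t + 1 = 2*j := by exact_mod_cast this
      omega
    exact mul_ne_zero h1 h2
  apply mul_right_cancel₀ hfac
  linear_combination (a2*(2*((4*(t:ℚ)+1)-2*j))) * hx
    + (x1*((4*(t:ℚ)+1)-2*j)) * hR2
    + (x1*((4*(t:ℚ)+1)-2*j)*((4*(t:ℚ)-2-4*j))) * hR1
    - (x1*((4*(t:ℚ)+1)-2*j)*((4*(t:ℚ)-2-4*j))) * hc1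
    + (((4*(t:ℚ)+1)-2*j)*((4*(t:ℚ)-2-4*j))) * ho
    + (4*(-1:ℚ)^j*K*((4*(t:ℚ)+1)-2*j)) * hI2

lemma mainlem (ht : 1 ≤ t) (j : ℕ) :
    (2*j ≤ 4*t+2 → (binKraw (4*t+2) (2*t+2) (2*j) : ℚ) * ((4*t+2).choose (2*j))
      = (-1:ℚ)^j * (((2*t).choose j : ℚ) - (if 1 ≤ j then ((2*t).choose (j-1) : ℚ) else 0))
          * ((4*t+2).choose (2*t+2)))
  ∧ (2*j+1 ≤ 4*t+2 → (binKraw (4*t+2) (2*t+2) (2*j+1) : ℚ) * ((4*t+2).choose (2*j+1))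
      = (-1:ℚ)^(j+1) * 2 * ((2*t).choose j : ℚ) * ((4*t+2).choose (2*t+2))) := by
  induction j with
  | zero =>
    constructor
    · intro _
      rw [show 2*0 = 0 by omega, kraw_zero]
      simp
    · intro h
      refine stepA t ht 0 h ?_
      rw [show 2*0 = 0 by omega, kraw_zero]
      simp
  | succ i ih =>
    constructor
    · intro h
      exact stepB t ht i (by omega) (ih.2 (by omega))
    · intro h
      refine stepA t ht (i+1) h ?_
      exact stepB t ht i (by omega) (ih.2 (by omega))

end Main

/-- Eigenvalues of the Hamming graph `H_{4t+2,2t+2}`: explicit formulas for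
`K_{2t+2}^{4t+2}(2j)` and `K_{2t+2}^{4t+2}(2j+1)`, with the convention
`C(2t,-1) = 0`. -/
theorem binKraw_4t_add_two (t j : ℕ) (ht : 1 ≤ t) :
    (2 * j ≤ 4 * t + 2 →
      ((binKraw (4 * t + 2) (2 * t + 2) (2 * j) : ℤ) : ℚ)
        = (-1 : ℚ) ^ j
            * (((2 * t).choose j : ℚ) - (if 1 ≤ j then ((2 * t).choose (j - 1) : ℚ) else 0))
            * ((4 * t + 2).choose (2 * t + 2)) / ((4 * t + 2).choose (2 * j))) ∧
    (2 * j + 1 ≤ 4 * t + 2 →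
      ((binKraw (4 * t + 2) (2 * t + 2) (2 * j + 1) : ℤ) : ℚ)
        = (-1 : ℚ) ^ (j + 1) * 2 * ((2 * t).choose j)
            * ((4 * t + 2).choose (2 * t + 2)) / ((4 * t + 2).choose (2 * j + 1))) := by
  obtain ⟨h1, h2⟩ := mainlem t ht j
  constructor
  · intro h
    have hne : (((4*t+2).choose (2*j) : ℕ) : ℚ) ≠ 0 := by
      exact Nat.cast_ne_zero.mpr (Nat.choose_pos h).ne'
    rw [eq_div_iff hne]
    linear_combination h1 h
  · intro h
    have hne : (((4*t+2).choose (2*j+1) : ℕ) : ℚ) ≠ 0 :=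
      Nat.cast_ne_zero.mpr (Nat.choose_pos h).ne'
    rw [eq_div_iff hne]
    linear_combination h2 h
end
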